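/- Let S be a compact set, T ⊆ S, and V continuous on S with: V < 0 on the initial set I ⊆ S, V > 0 outside int(S), and along the flow V(x(t)) is strictly decreasing (dV/dt ≤ -ε for some ε related to compactness of S \ int(T)) whenever x(t) ∈ S \ int(T). Then a trajectory starting in I cannot remain in S \ int(T) for all time: since V is bounded below on the compact set S \ int(T), the trajectory must eventually enter int(T), and it cannot leave S before doing so (since V < 0 along the trajectory but V > 0 outside int(S)). -/

import Mathlib

open Set

/-- Reach-while-stay certificate: `V < 0` on the initial set `I`, `V > 0` outside
`int S`, and `V` strictly decreases (with rate at least `ε`) along the trajectory while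
it is in `S \ int T`. Then a trajectory starting in `I` must eventually enter `int T`,
staying in `S` until it does so. -/
theorem reach_while_stay (n : ℕ)
    (S I Ttarget : Set (EuclideanSpace ℝ (Fin n)))
    (hScompact : IsCompact S) (hIS : I ⊆ S) (hTS : Ttarget ⊆ S)
    (V : EuclideanSpace ℝ (Fin n) → ℝ) (hVcont : Continuous V)
    (hVI : ∀ y ∈ I, V y < 0)
    (hVout : ∀ y, y ∉ interior S → 0 < V y)
    (ε : ℝ) (hε : 0 < ε)
    (x : ℝ → EuclideanSpace ℝ (Fin n)) (hxcont : Continuous x)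
    (hx0 : x 0 ∈ I)
    (hdec : ∀ t : ℝ, 0 ≤ t → x t ∈ S \ interior Ttarget →
      ∃ d : ℝ, d ≤ -ε ∧ HasDerivAt (fun s => V (x s)) d t) :
    ∃ t : ℝ, 0 ≤ t ∧ x t ∈ interior Ttarget ∧ ∀ s ∈ Icc (0 : ℝ) t, x s ∈ S := by
  classical
  set f : ℝ → ℝ := fun s => V (x s) with hf
  have hfcont : Continuous f := hVcont.comp hxcont
  set C : Set (EuclideanSpace ℝ (Fin n)) := S \ interior Ttarget with hC
  have hCclosed : IsClosed C := hScompact.isClosed.sdiff isOpen_interior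
  set Q : ℝ → Prop := fun t => ∀ s ∈ Icc (0 : ℝ) t, x s ∈ C with hQdef
  have hQmono : ∀ {u v : ℝ}, u ≤ v → Q v → Q u := by
    intro u v huv hv s hs
    exact hv s ⟨hs.1, hs.2.trans huv⟩
  have hf0 : f 0 < 0 := hVI _ hx0
  -- decrease lemma
  have hdecr : ∀ t : ℝ, 0 ≤ t → Q t → f t + ε * t ≤ f 0 := by
    intro t ht hQt
    rcases eq_or_lt_of_le ht with h | h
    · simp [← h]
    · set g : ℝ → ℝ := fun s => f s + ε * s with hg
      have hanti : AntitoneOn g (Icc 0 t) := by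
        have hint : interior (Icc (0:ℝ) t) = Ioo 0 t := interior_Icc
        have key : ∀ s ∈ interior (Icc (0:ℝ) t),
            ∃ d : ℝ, d ≤ -ε ∧ HasDerivAt g (d + ε) s := by
          intro s hs
          rw [hint] at hs
          obtain ⟨d, hd, hdf⟩ := hdec s hs.1.le (hQt s ⟨hs.1.le, hs.2.le⟩)
          refine ⟨d, hd, ?_⟩
          have h2 : HasDerivAt (fun s : ℝ => ε * s) ε s := by
            simpa using (hasDerivAt_id s).const_mul ε
          exact hdf.add h2
        refine antitoneOn_of_deriv_nonpos (convex_Icc 0 t)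
          (hfcont.add (continuous_const.mul continuous_id)).continuousOn
          (fun s hs => ?_) (fun s hs => ?_)
        · obtain ⟨d, hd, hdg⟩ := key s hs
          exact hdg.differentiableAt.differentiableWithinAt
        · obtain ⟨d, hd, hdg⟩ := key s hs
          rw [hdg.deriv]
          linarith
      have := hanti (left_mem_Icc.mpr ht) (right_mem_Icc.mpr ht) ht
      simpa [hg] using this
  by_cases h0 : x 0 ∈ interior Ttarget
  · refine ⟨0, le_refl 0, h0, fun s hs => ?_⟩
    have : s = 0 := le_antisymm hs.2 hs.1
    rw [this]; exact hIS hx0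
  by_contra H
  push_neg at H
  -- H : ∀ t, 0 ≤ t → x t ∈ interior Ttarget → ∃ s ∈ Icc 0 t, x s ∉ S
  have hQ0 : Q 0 := by
    intro s hs
    have : s = 0 := le_antisymm hs.2 hs.1
    rw [this]; exact ⟨hIS hx0, h0⟩
  -- openness step
  have step : ∀ u : ℝ, 0 ≤ u → Q u → ∃ v : ℝ, u < v ∧ Q v := by
    intro u hu hQu
    have hfu : f u < 0 := by
      have := hdecr u hu hQu
      nlinarith
    have hxuS : x u ∈ interior S := by
      by_contra hxu
      have := hVout _ hxu
      linarith
    have hUopen : IsOpen (x ⁻¹' interior S ∩ f ⁻¹' Iio 0) :=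
      (isOpen_interior.preimage hxcont).inter (isOpen_Iio.preimage hfcont)
    have huU : u ∈ x ⁻¹' interior S ∩ f ⁻¹' Iio 0 := ⟨hxuS, hfu⟩
    obtain ⟨δ, hδ, hball⟩ := Metric.isOpen_iff.mp hUopen u huU
    -- no point of [u, u+δ) enters interior Ttarget
    have hnoT : ∀ s : ℝ, u ≤ s → s < u + δ → x s ∉ interior Ttarget := by
      intro s hus hsδ hxs
      obtain ⟨s', hs', hxs'⟩ := H s (hu.trans hus) hxs
      rcases le_or_gt s' u with h' | h'
      · exact hxs' (hQu s' ⟨hs'.1, h'⟩).1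
      · have : s' ∈ Metric.ball u δ := by
          rw [Metric.mem_ball, Real.dist_eq, abs_of_nonneg (by linarith)]
          have := hs'.2
          linarith
        exact hxs' (interior_subset (hball this).1)
    refine ⟨u + δ / 2, by linarith, fun s hs => ?_⟩
    rcases le_or_gt s u with h' | h'
    · exact hQu s ⟨hs.1, h'⟩
    · have hsball : s ∈ Metric.ball u δ := by
        rw [Metric.mem_ball, Real.dist_eq, abs_of_nonneg (by linarith)]
        have := hs.2; linarith
      exact ⟨interior_subset (hball hsball).1, hnoT s h'.le (by have := hs.2; linarith)⟩
  -- Q holds for all t ≥ 0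
  have hQall : ∀ t : ℝ, 0 ≤ t → Q t := by
    intro t ht
    set A : Set ℝ := {u | u ∈ Icc 0 t ∧ Q u} with hA
    have hA0 : (0 : ℝ) ∈ A := ⟨⟨le_refl 0, ht⟩, hQ0⟩
    have hAbdd : BddAbove A := ⟨t, fun u hu => hu.1.2⟩
    set m := sSup A with hm
    have hm0 : 0 ≤ m := le_csSup hAbdd hA0
    have hmt : m ≤ t := csSup_le ⟨0, hA0⟩ (fun u hu => hu.1.2)
    have hQbelow : ∀ s : ℝ, 0 ≤ s → s < m → x s ∈ C := by
      intro s hs hsm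
      obtain ⟨u, huA, hsu⟩ := exists_lt_of_lt_csSup ⟨0, hA0⟩ hsm
      exact huA.2 s ⟨hs, hsu.le⟩
    have hQm : Q m := by
      intro s hs
      rcases eq_or_lt_of_le hs.2 with h | h
      · -- s = m
        rw [h]
        rcases eq_or_lt_of_le hm0 with h' | h'
        · rw [← h']; exact (hQ0 0 ⟨le_refl 0, le_refl 0⟩)
        · -- m > 0 : x m is a limit of points in the closed set C
          refine hCclosed.mem_of_tendsto
            ((hxcont.tendsto m).mono_left (nhdsWithin_le_nhds (s := Iio m))) ?_
          filter_upwards [Ioo_mem_nhdsLT_of_mem ⟨h', le_refl m⟩] with r hr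
          exact hQbelow r hr.1.le hr.2
      · exact hQbelow s hs.1 h
    rcases eq_or_lt_of_le hmt with h | h
    · exact h ▸ hQm
    · obtain ⟨v, hmv, hQv⟩ := step m hm0 hQm
      have hwA : min v t ∈ A :=
        ⟨⟨le_trans hm0 (le_min hmv.le hmt), min_le_right _ _⟩, hQmono (min_le_left _ _) hQv⟩
      have : min v t ≤ m := le_csSup hAbdd hwA
      have : m < min v t := lt_min hmv h
      linarith
  -- final contradiction: V bounded below on S
  obtain ⟨y0, _, hy0'⟩ := hScompact.exists_isMinOn ⟨x 0, hIS hx0⟩ hVcont.continuousOn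
  have hy0 : ∀ y ∈ S, V y0 ≤ V y := fun y hy => hy0' hy
  set t0 : ℝ := (f 0 - V y0 + 1) / ε with ht0
  have ht0pos : 0 ≤ t0 := by
    have : V y0 ≤ f 0 := hy0 _ (hIS hx0)
    exact div_nonneg (by linarith) hε.le
  have h1 : f t0 + ε * t0 ≤ f 0 := hdecr t0 ht0pos (hQall t0 ht0pos)
  have h2 : V y0 ≤ f t0 := hy0 _ (hQall t0 ht0pos t0 ⟨ht0pos, le_refl _⟩).1
  have h3 : ε * t0 = f 0 - V y0 + 1 := by
    rw [ht0, mul_div_assoc', mul_div_cancel_left₀ _ hε.ne']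
  linarith
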